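/- Let G be an r-regular graph and let H be a subset of vertices of G such that the subgraph induced by H has a block decomposition in which every block is a complete graph of odd order, and H is a union of components of G minus some vertex set S. If B is a leaf block of the induced subgraph on H, with B isomorphic to K_p for some 1 ≤ p ≤ r, then the number of edges of G joining V(B) to S is at least (p-1)(r-p+1), and in particular at least r-1. -/

import Mathlib

open SimpleGraph

variable {V : Type*} [Fintype V]

/-- The induced subgraph on B is connected (or a single vertex / empty ok? require Connected)
and has no cut vertex. -/
def NoCutVertexSet (G : SimpleGraph V) (B : Set V) : Prop :=
  (G.induce B).Connected ∧ ∀ v ∈ B, (G.induce (B \ {v})).Preconnected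

/-- B is a block (maximal 2-connected piece, in the sense of no cut vertex) of the subgraph
of G induced on H. -/
def IsBlockWithin (G : SimpleGraph V) (H B : Set V) : Prop :=
  B ⊆ H ∧ NoCutVertexSet G B ∧
    ∀ B', B ⊆ B' → B' ⊆ H → NoCutVertexSet G B' → B' = B

/-- B is a block of G. -/
def IsBlock (G : SimpleGraph V) (B : Set V) : Prop :=
  IsBlockWithin G Set.univ B

/-- The set B induces a complete graph of odd order. -/
def IsOddComplete (G : SimpleGraph V) (B : Set V) : Prop :=
  Odd B.ncard ∧ ∀ u ∈ B, ∀ v ∈ B, u ≠ v → G.Adj u v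

/-- v is a cut vertex of the subgraph of G induced on H. -/
def IsCutVertexWithin (G : SimpleGraph V) (H : Set V) (v : V) : Prop :=
  v ∈ H ∧ ∃ x y : V, ∃ hx : x ∈ H \ {v}, ∃ hy : y ∈ H \ {v},
    (G.induce H).Reachable ⟨x, hx.1⟩ ⟨y, hy.1⟩ ∧
      ¬ (G.induce (H \ {v})).Reachable ⟨x, hx⟩ ⟨y, hy⟩

/-- B is a leaf block of the subgraph of G induced on H: a block containing at most one
cut vertex. -/
def IsLeafBlockWithin (G : SimpleGraph V) (H B : Set V) : Prop :=
  IsBlockWithin G H B ∧ {v ∈ B | IsCutVertexWithin G H v}.Subsingleton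

/-- C is a connected component of G - S. -/
def IsComponentAvoiding (G : SimpleGraph V) (S C : Set V) : Prop :=
  C.Nonempty ∧ Disjoint C S ∧ (G.induce C).Connected ∧
    ∀ x ∈ C, ∀ y, y ∉ S → G.Adj x y → y ∈ C

/-- G is claw-free. -/
def ClawFree (G : SimpleGraph V) : Prop :=
  IsEmpty (completeBipartiteGraph (Fin 1) (Fin 3) ↪g G)

set_option linter.unusedSectionVars false

lemma reach_of_walk {G : SimpleGraph V} {T B' : Set V} :
    ∀ {a b : ↥T} (q : (G.induce T).Walk a b),
    (∀ z ∈ q.support, (z : V) ∈ B') →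
    ∀ (ha : (a : V) ∈ B') (hb : (b : V) ∈ B'),
    (G.induce B').Reachable ⟨a, ha⟩ ⟨b, hb⟩ := by
  intro a b q
  induction q with
  | nil => intro _ ha hb; exact Reachable.refl _
  | @cons a c b h q ih =>
    intro hsup ha hb
    have hc : (c : V) ∈ B' := hsup c (by simp [Walk.support_cons])
    have hadj : (G.induce B').Adj ⟨a, ha⟩ ⟨c, hc⟩ := by
      have : G.Adj (a : V) (c : V) := h
      exact this
    exact (hadj.reachable).trans (ih (fun z hz => hsup z (by simp [Walk.support_cons, hz])) hc hb)

lemma path_escape {G : SimpleGraph V} {T : Set V} {w y : ↥T}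
    (p : (G.induce T).Walk w y) (hp : p.IsPath) (u z : ↥T)
    (hz : z ∈ p.support) (hzu : z ≠ u) :
    (∃ q : (G.induce T).Walk z w, u ∉ q.support ∧ ∀ x ∈ q.support, x ∈ p.support) ∨
    (∃ q : (G.induce T).Walk z y, u ∉ q.support ∧ ∀ x ∈ q.support, x ∈ p.support) := by
  classical
  by_cases hu1 : u ∈ (p.takeUntil z hz).support
  · right
    refine ⟨p.dropUntil z hz, ?_, fun x hx => p.support_dropUntil_subset hz hx⟩
    intro hu2
    have hspec := p.take_spec hz
    have hnodup : p.support.Nodup := hp.support_nodup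
    rw [← hspec, Walk.support_append] at hnodup
    have hdisj := List.disjoint_of_nodup_append hnodup
    have : u ∈ (p.dropUntil z hz).support.tail := by
      have hcons : (p.dropUntil z hz).support = z :: (p.dropUntil z hz).support.tail :=
        (p.dropUntil z hz).support_eq_cons
      rw [hcons] at hu2
      rcases List.mem_cons.mp hu2 with h | h
      · exact absurd h.symm hzu
      · exact h
    exact hdisj hu1 this
  · left
    refine ⟨(p.takeUntil z hz).reverse, ?_, fun x hx => by
      rw [Walk.support_reverse] at hx
      exact p.support_takeUntil_subset hz (List.mem_reverse.mp hx)⟩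
    rw [Walk.support_reverse, List.mem_reverse]
    exact hu1

lemma neighbor_outside_is_cut {G : SimpleGraph V} {H B : Set V} (hBH : B ⊆ H)
    (hmax : ∀ B', B ⊆ B' → B' ⊆ H → NoCutVertexSet G B' → B' = B)
    (hcomplete : ∀ u ∈ B, ∀ v ∈ B, u ≠ v → G.Adj u v)
    {v w y : V} (hv : v ∈ B) (hy : y ∈ B) (hyv : y ≠ v)
    (hw : w ∈ H) (hwB : w ∉ B) (hadj : G.Adj v w) :
    IsCutVertexWithin G H v := by
  classical
  have hwv : w ≠ v := fun h => hwB (h ▸ hv)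
  have hxw : w ∈ H \ {v} := ⟨hw, hwv⟩
  have hyy : y ∈ H \ {v} := ⟨hBH hy, hyv⟩
  refine ⟨hBH hv, w, y, hxw, hyy, ?_, ?_⟩
  · have h1 : (G.induce H).Adj ⟨w, hxw.1⟩ ⟨v, hBH hv⟩ := hadj.symm
    have h2 : (G.induce H).Adj ⟨v, hBH hv⟩ ⟨y, hyy.1⟩ := hcomplete v hv y hy (Ne.symm hyv)
    exact h1.reachable.trans h2.reachable
  · rintro ⟨q⟩
    set T : Set V := H \ {v} with hT
    have hpa : q.bypass.IsPath := q.bypass_isPath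
    set pa : (G.induce T).Walk ⟨w, hxw⟩ ⟨y, hyy⟩ := q.bypass with hpadef
    set P : Set V := Subtype.val '' {x : ↥T | x ∈ pa.support} with hP
    set B' : Set V := B ∪ P with hB'
    have hPB' : ∀ x : ↥T, x ∈ pa.support → (x : V) ∈ B' :=
      fun x hx => Or.inr ⟨x, hx, rfl⟩
    have hwB' : w ∈ B' := hPB' _ pa.start_mem_support
    have hyB' : y ∈ B' := Or.inl hy
    have hvB' : v ∈ B' := Or.inl hv
    have hB'H : B' ⊆ H := by
      rintro z (hz | ⟨x, _, rfl⟩)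
      · exact hBH hz
      · exact x.2.1
    -- key claim: in induce (B' \ {u}), every vertex reaches some element of B
    have key : ∀ u : V, ∀ z : V, ∀ hz : z ∈ B' \ {u},
        ∃ c, ∃ hc : c ∈ B' \ {u}, c ∈ B ∧
          (G.induce (B' \ {u})).Reachable ⟨z, hz⟩ ⟨c, hc⟩ := by
      intro u z hz
      rcases hz.1 with hzB | ⟨zz, hzz, hzeq⟩
      · exact ⟨z, hz, hzB, Reachable.refl _⟩
      · have hzu : z ≠ u := hz.2
        by_cases huv : u = v
        · subst huv
          -- whole path avoids v = u
          have hre := reach_of_walk (pa.dropUntil zz hzz)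
            (B' := B' \ {u}) (fun x hx =>
              ⟨hPB' x (pa.support_dropUntil_subset hzz hx), x.2.2⟩)
            (ha := by rw [hzeq]; exact hz) (hb := ⟨hyB', hyv⟩)
          refine ⟨y, ⟨hyB', hyv⟩, hy, ?_⟩
          have : (⟨z, hz⟩ : ↥(B' \ {u})) = ⟨(zz : V), by rw [hzeq]; exact hz⟩ := by
            apply Subtype.ext; exact hzeq.symm
          rw [this]; exact hre
        · by_cases hup : ∃ x ∈ pa.support, (x : V) = u
          · obtain ⟨u', hus, hueq⟩ := hup
            have hzzu : zz ≠ u' := fun h => hzu (by rw [← hzeq, h, hueq])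
            have hne : ∀ (x : ↥T) (qq : List ↥T), u' ∉ qq → x ∈ qq → (x : V) ≠ u := by
              intro x qq hn hx hxe
              exact hn (by rwa [show x = u' from Subtype.ext (hxe.trans hueq.symm)] at hx)
            rcases path_escape pa hpa u' zz hzz hzzu with ⟨qq, hqn, hqs⟩ | ⟨qq, hqn, hqs⟩
            · -- walk to w, then step to v
              have hwu : w ≠ u := hne ⟨w, hxw⟩ qq.support hqn qq.end_mem_support
              have hre := reach_of_walk qq (B' := B' \ {u}) (fun x hx =>
                ⟨hPB' x (hqs x hx), hne x qq.support hqn hx⟩)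
                (ha := by rw [hzeq]; exact hz) (hb := ⟨hwB', hwu⟩)
              have hstep : (G.induce (B' \ {u})).Adj ⟨w, ⟨hwB', hwu⟩⟩
                  ⟨v, ⟨hvB', Ne.symm huv⟩⟩ := hadj.symm
              refine ⟨v, ⟨hvB', Ne.symm huv⟩, hv, ?_⟩
              have : (⟨z, hz⟩ : ↥(B' \ {u})) = ⟨(zz : V), by rw [hzeq]; exact hz⟩ := by
                apply Subtype.ext; exact hzeq.symm
              rw [this]
              exact hre.trans hstep.reachable
            · have hyu : y ≠ u := hne ⟨y, hyy⟩ qq.support hqn qq.end_mem_support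
              have hre := reach_of_walk qq (B' := B' \ {u}) (fun x hx =>
                ⟨hPB' x (hqs x hx), hne x qq.support hqn hx⟩)
                (ha := by rw [hzeq]; exact hz) (hb := ⟨hyB', hyu⟩)
              refine ⟨y, ⟨hyB', hyu⟩, hy, ?_⟩
              have : (⟨z, hz⟩ : ↥(B' \ {u})) = ⟨(zz : V), by rw [hzeq]; exact hz⟩ := by
                apply Subtype.ext; exact hzeq.symm
              rw [this]; exact hre
          · push_neg at hup
            by_cases hyu : y = u
            · -- go to w then to v
              have hwu : w ≠ u := hup _ pa.start_mem_support
              have hre := reach_of_walk ((pa.takeUntil zz hzz).reverse)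
                (B' := B' \ {u}) (fun x hx => by
                  rw [Walk.support_reverse, List.mem_reverse] at hx
                  exact ⟨hPB' x (pa.support_takeUntil_subset hzz hx),
                    hup x (pa.support_takeUntil_subset hzz hx)⟩)
                (ha := by rw [hzeq]; exact hz) (hb := ⟨hwB', hwu⟩)
              have hstep : (G.induce (B' \ {u})).Adj ⟨w, ⟨hwB', hwu⟩⟩
                  ⟨v, ⟨hvB', Ne.symm huv⟩⟩ := hadj.symm
              refine ⟨v, ⟨hvB', Ne.symm huv⟩, hv, ?_⟩
              have : (⟨z, hz⟩ : ↥(B' \ {u})) = ⟨(zz : V), by rw [hzeq]; exact hz⟩ := by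
                apply Subtype.ext; exact hzeq.symm
              rw [this]
              exact hre.trans hstep.reachable
            · have hre := reach_of_walk (pa.dropUntil zz hzz)
                (B' := B' \ {u}) (fun x hx =>
                  ⟨hPB' x (pa.support_dropUntil_subset hzz hx),
                    hup x (pa.support_dropUntil_subset hzz hx)⟩)
                (ha := by rw [hzeq]; exact hz) (hb := ⟨hyB', hyu⟩)
              refine ⟨y, ⟨hyB', hyu⟩, hy, ?_⟩
              have : (⟨z, hz⟩ : ↥(B' \ {u})) = ⟨(zz : V), by rw [hzeq]; exact hz⟩ := by
                apply Subtype.ext; exact hzeq.symm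
              rw [this]; exact hre
    -- full connectivity of B'
    have keyfull : ∀ z : V, ∀ hz : z ∈ B',
        ∃ c, ∃ hc : c ∈ B', c ∈ B ∧ (G.induce B').Reachable ⟨z, hz⟩ ⟨c, hc⟩ := by
      intro z hz
      rcases hz with hzB | ⟨zz, hzz, hzeq⟩
      · exact ⟨z, Or.inl hzB, hzB, Reachable.refl _⟩
      · have hre := reach_of_walk (pa.dropUntil zz hzz)
          (B' := B') (fun x hx => hPB' x (pa.support_dropUntil_subset hzz hx))
          (ha := hPB' _ hzz)
          (hb := hyB')
        refine ⟨y, hyB', hy, ?_⟩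
        have : (⟨z, Or.inr ⟨zz, hzz, hzeq⟩⟩ : ↥B') = ⟨(zz : V), hPB' _ hzz⟩ :=
          Subtype.ext hzeq.symm
        rw [this]; exact hre
    have hnc : NoCutVertexSet G B' := by
      constructor
      · haveI : Nonempty ↥B' := ⟨⟨v, hvB'⟩⟩
        refine Connected.mk ?_
        intro z1 z2
        obtain ⟨c1, hc1, hc1B, hr1⟩ := keyfull z1 z1.2
        obtain ⟨c2, hc2, hc2B, hr2⟩ := keyfull z2 z2.2
        have hmid : (G.induce B').Reachable ⟨c1, hc1⟩ ⟨c2, hc2⟩ := by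
          by_cases h : c1 = c2
          · subst h; exact Reachable.refl _
          · exact (show (G.induce B').Adj ⟨c1, hc1⟩ ⟨c2, hc2⟩ from
              hcomplete c1 hc1B c2 hc2B h).reachable
        exact (hr1.trans hmid).trans hr2.symm
      · intro u _ z1 z2
        obtain ⟨c1, hc1, hc1B, hr1⟩ := key u z1 z1.2
        obtain ⟨c2, hc2, hc2B, hr2⟩ := key u z2 z2.2
        have hmid : (G.induce (B' \ {u})).Reachable ⟨c1, hc1⟩ ⟨c2, hc2⟩ := by
          by_cases h : c1 = c2
          · subst h; exact Reachable.refl _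
          · exact (show (G.induce (B' \ {u})).Adj ⟨c1, hc1⟩ ⟨c2, hc2⟩ from
              hcomplete c1 hc1B c2 hc2B h).reachable
        exact (hr1.trans hmid).trans hr2.symm
    have := hmax B' Set.subset_union_left hB'H hnc
    rw [this] at hwB'
    exact hwB hwB'

lemma preconnected_of_subsingleton {G : SimpleGraph V} {s : Set V} (h : s.Subsingleton) :
    (G.induce s).Preconnected := fun a b => by
  have : a = b := Subtype.ext (h a.2 b.2)
  rw [this]

lemma singleton_no_outside {G : SimpleGraph V} {H B : Set V} (hBH : B ⊆ H)
    (hmax : ∀ B', B ⊆ B' → B' ⊆ H → NoCutVertexSet G B' → B' = B)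
    {v w : V} (hB : B = {v}) (hw : w ∈ H) (hwB : w ∉ B) (hadj : G.Adj v w) : False := by
  classical
  have hvm : v ∈ ({v, w} : Set V) := Or.inl rfl
  have hwm : w ∈ ({v, w} : Set V) := Or.inr rfl
  have hnc : NoCutVertexSet G ({v, w} : Set V) := by
    constructor
    · haveI : Nonempty ↥({v, w} : Set V) := ⟨⟨v, hvm⟩⟩
      refine Connected.mk ?_
      have hadj' : (G.induce ({v, w} : Set V)).Adj ⟨v, hvm⟩ ⟨w, hwm⟩ := hadj
      have hall : ∀ z : ↥({v, w} : Set V), z = ⟨v, hvm⟩ ∨ z = ⟨w, hwm⟩ := by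
        rintro ⟨a, ha⟩
        rcases Set.mem_insert_iff.mp ha with rfl | ha
        · left; rfl
        · right; exact Subtype.ext (Set.mem_singleton_iff.mp ha)
      intro z1 z2
      rcases hall z1 with rfl | rfl <;> rcases hall z2 with rfl | rfl
      · exact Reachable.refl _
      · exact hadj'.reachable
      · exact hadj'.symm.reachable
      · exact Reachable.refl _
    · intro u hu
      apply preconnected_of_subsingleton
      intro a ha b hb
      rcases Set.mem_insert_iff.mp hu with rfl | hu
      · have ha' : a = w := by
          rcases Set.mem_insert_iff.mp ha.1 with h | h
          · exact absurd h ha.2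
          · exact h
        have hb' : b = w := by
          rcases Set.mem_insert_iff.mp hb.1 with h | h
          · exact absurd h hb.2
          · exact h
        rw [ha', hb']
      · rw [Set.mem_singleton_iff] at hu; subst hu
        have ha' : a = v := by
          rcases Set.mem_insert_iff.mp ha.1 with h | h
          · exact h
          · exact absurd (Set.mem_singleton_iff.mp h) ha.2
        have hb' : b = v := by
          rcases Set.mem_insert_iff.mp hb.1 with h | h
          · exact h
          · exact absurd (Set.mem_singleton_iff.mp h) hb.2
        rw [ha', hb']
  have h := hmax ({v, w} : Set V) (by rw [hB]; rintro x rfl; exact hvm)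
    (by rintro x hx; rcases Set.mem_insert_iff.mp hx with rfl | hx
        · exact hBH (hB ▸ rfl)
        · rw [Set.mem_singleton_iff] at hx; subst hx; exact hw) hnc
  exact hwB (h ▸ hwm)

theorem leaf_block_edges_to_S (G : SimpleGraph V) [DecidableRel G.Adj]
    (r : ℕ) (hreg : G.IsRegularOfDegree r)
    (S H : Set V) (hHS : Disjoint H S)
    (hUnion : ∀ x ∈ H, ∀ y, y ∉ S → G.Adj x y → y ∈ H)
    (hbad : ∀ B, IsBlockWithin G H B → IsOddComplete G B)
    (B : Set V) (hleaf : IsLeafBlockWithin G H B)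
    (p : ℕ) (hp1 : 1 ≤ p) (hpr : p ≤ r)
    (hBccard : B.ncard = p) (hBcomplete : ∀ u ∈ B, ∀ v ∈ B, u ≠ v → G.Adj u v) :
    (p - 1) * (r - p + 1) ≤ {e : V × V | e.1 ∈ B ∧ e.2 ∈ S ∧ G.Adj e.1 e.2}.ncard ∧
      r - 1 ≤ {e : V × V | e.1 ∈ B ∧ e.2 ∈ S ∧ G.Adj e.1 e.2}.ncard := by
  classical
  obtain ⟨⟨hBH, hBnc, hmax⟩, hcut⟩ := hleaf
  set N : Set V := {v ∈ B | ∃ w, w ∈ H ∧ w ∉ B ∧ G.Adj v w} with hNdef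
  have hN1 : p = 1 → N = ∅ := by
    intro hP
    ext a
    simp only [Set.mem_empty_iff_false, iff_false]
    rintro ⟨haB, w, hwH, hwB, hadj⟩
    obtain ⟨v0, hv0⟩ := Set.ncard_eq_one.mp (hBccard.trans hP)
    have hav : a = v0 := by rw [hv0] at haB; exact haB
    subst hav
    exact singleton_no_outside hBH hmax hv0 hwH hwB hadj
  have hNsub : N.Subsingleton := by
    by_cases hP : p = 1
    · rw [hN1 hP]; exact Set.subsingleton_empty
    · intro a ha b hb
      obtain ⟨haB, wa, hwaH, hwaB, hadja⟩ := ha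
      obtain ⟨hbB, wb, hwbH, hwbB, hadjb⟩ := hb
      have hcard : 1 < B.ncard := by rw [hBccard]; omega
      obtain ⟨ya, hyaB, hya⟩ := Set.exists_ne_of_one_lt_ncard hcard a
      obtain ⟨yb, hybB, hyb⟩ := Set.exists_ne_of_one_lt_ncard hcard b
      have ca := neighbor_outside_is_cut hBH hmax hBcomplete haB hyaB hya hwaH hwaB hadja
      have cb := neighbor_outside_is_cut hBH hmax hBcomplete hbB hybB hyb hwbH hwbB hadjb
      exact hcut ⟨haB, ca⟩ ⟨hbB, cb⟩
  set Sv : V → Finset V := fun v => G.neighborFinset v ∩ S.toFinset with hSvdef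
  set D : Finset V := B.toFinset \ N.toFinset with hDdef
  have hBf : B.toFinset.card = p := by rw [← Set.ncard_eq_toFinset_card', hBccard]
  have hSv : ∀ v ∈ D, (Sv v).card = r - p + 1 := by
    intro v hvD
    rw [hDdef, Finset.mem_sdiff, Set.mem_toFinset, Set.mem_toFinset] at hvD
    obtain ⟨hvB, hvN⟩ := hvD
    have hsplit : G.neighborFinset v = (B.toFinset.erase v) ∪ Sv v := by
      ext y
      simp only [mem_neighborFinset, Finset.mem_union, Finset.mem_erase, Set.mem_toFinset,
        Finset.mem_inter, hSvdef]
      constructor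
      · intro hadj
        by_cases hyS : y ∈ S
        · right; exact ⟨hadj, hyS⟩
        · have hyH := hUnion v (hBH hvB) y hyS hadj
          have hyB : y ∈ B := by
            by_contra h
            exact hvN ⟨hvB, y, hyH, h, hadj⟩
          exact Or.inl ⟨(G.ne_of_adj hadj).symm, hyB⟩
      · rintro (⟨hne, hyB⟩ | ⟨hadj, _⟩)
        · exact hBcomplete v hvB y hyB (Ne.symm hne)
        · exact hadj
    have hdisj : Disjoint (B.toFinset.erase v) (Sv v) := by
      rw [Finset.disjoint_left]
      intro y hy1 hy2
      rw [Finset.mem_erase, Set.mem_toFinset] at hy1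
      have hyS : y ∈ S := by
        have := Finset.mem_inter.mp hy2
        exact Set.mem_toFinset.mp this.2
      exact (Set.disjoint_left.mp hHS) (hBH hy1.2) hyS
    have hdeg : (G.neighborFinset v).card = r := hreg v
    have hcard2 : (G.neighborFinset v).card = (B.toFinset.erase v).card + (Sv v).card := by
      rw [hsplit, Finset.card_union_of_disjoint hdisj]
    have herase : (B.toFinset.erase v).card = p - 1 := by
      rw [Finset.card_erase_of_mem (Set.mem_toFinset.mpr hvB), hBf]
    omega
  set F : Finset (V × V) := D.biUnion (fun v => {v} ×ˢ Sv v) with hFdef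
  have hFcard : F.card = D.card * (r - p + 1) := by
    rw [hFdef, Finset.card_biUnion]
    · rw [Finset.sum_congr rfl (fun v hv => by
        rw [Finset.card_product, Finset.card_singleton, one_mul, hSv v hv])]
      rw [Finset.sum_const, smul_eq_mul]
    · intro v1 h1 v2 h2 hne
      simp only [Function.onFun]
      rw [Finset.disjoint_left]
      intro e he1 he2
      rw [Finset.mem_product, Finset.mem_singleton] at he1 he2
      exact hne (he1.1.symm.trans he2.1)
  have hEF : F.card ≤ {e : V × V | e.1 ∈ B ∧ e.2 ∈ S ∧ G.Adj e.1 e.2}.ncard := by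
    rw [Set.ncard_eq_toFinset_card']
    apply Finset.card_le_card
    intro e he
    rw [Set.mem_toFinset]
    rw [hFdef, Finset.mem_biUnion] at he
    obtain ⟨v, hvD, hev⟩ := he
    rw [Finset.mem_product, Finset.mem_singleton] at hev
    obtain ⟨he1, he2⟩ := hev
    have hint := Finset.mem_inter.mp he2
    have hvB : v ∈ B := by
      rw [hDdef, Finset.mem_sdiff, Set.mem_toFinset] at hvD
      exact hvD.1
    refine ⟨?_, Set.mem_toFinset.mp hint.2, ?_⟩
    · rw [he1]; exact hvB
    · rw [he1]; exact (G.mem_neighborFinset v e.2).mp hint.1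
  have hmain : D.card * (r - p + 1) ≤
      {e : V × V | e.1 ∈ B ∧ e.2 ∈ S ∧ G.Adj e.1 e.2}.ncard := hFcard ▸ hEF
  have hDcard : p - 1 ≤ D.card := by
    have hle := Finset.le_card_sdiff N.toFinset B.toFinset
    have hNf : N.toFinset.card ≤ 1 := by
      apply Finset.card_le_one.mpr
      intro a ha b hb
      exact hNsub (Set.mem_toFinset.mp ha) (Set.mem_toFinset.mp hb)
    rw [hDdef]
    omega
  constructor
  · calc (p - 1) * (r - p + 1) ≤ D.card * (r - p + 1) :=
        Nat.mul_le_mul_right _ hDcard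
      _ ≤ _ := hmain
  · by_cases hP : p = 1
    · have hNf0 : N.toFinset = ∅ := Set.toFinset_eq_empty.mpr (hN1 hP)
      have hD1 : D.card = p := by rw [hDdef, hNf0, Finset.sdiff_empty, hBf]
      have hpos := Nat.le_mul_of_pos_left (r - p + 1) (by omega : 0 < D.card)
      omega
    · have h2 : r - p ≤ (p - 1) * (r - p) := Nat.le_mul_of_pos_left _ (by omega)
      have h3 : (p - 1) * (r - p + 1) = (p - 1) * (r - p) + (p - 1) := by ring
      have h4 := Nat.mul_le_mul_right (r - p + 1) hDcard
      omega
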